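/- The Dickson invariants D_{n,0}, D_{n,1}, …, D_{n,n−1} are algebraically independent over 𝔽_p in the polynomial ring S = 𝔽_p[y_1,…,y_n]. -/

import Mathlib

open Polynomial

/-- The Dickson product polynomial `f_n(X) = ∏_w (X + w)`, where `w` runs over all
`p^n` linear combinations of the variables `y_1, …, y_n` with coefficients in `𝔽_p`. -/
noncomputable def dicksonF (p n : ℕ) [Fact p.Prime] : Polynomial (MvPolynomial (Fin n) (ZMod p)) :=
  ∏ c : Fin n → ZMod p,
    (Polynomial.X + Polynomial.C (∑ i : Fin n, c i • MvPolynomial.X i))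

/-- The Dickson invariant `D_{n,r}`: the coefficient of `X^{p^r}` in `f_n`. -/
noncomputable def dicksonD (p n : ℕ) [Fact p.Prime] (r : ℕ) : MvPolynomial (Fin n) (ZMod p) :=
  (dicksonF p n).coeff (p ^ r)

namespace DicksonAux

variable (p : ℕ) [Fact p.Prime]

theorem monic_XpX : (X ^ p - X : (ZMod p)[X]).Monic := by
  have h1 : 1 < p := (Fact.out : p.Prime).one_lt
  refine Polynomial.monic_X_pow_sub (p := (X : (ZMod p)[X])) ?_
  rw [degree_X]
  exact_mod_cast h1

theorem prod_X_sub_C_zmod : (∏ c : ZMod p, (X - C c)) = X ^ p - X := by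
  have h1 : 1 < p := (Fact.out : p.Prime).one_lt
  haveI : NeZero p := ⟨(Fact.out : p.Prime).ne_zero⟩
  have hroots := FiniteField.roots_X_pow_card_sub_X (ZMod p)
  rw [ZMod.card p] at hroots
  have hnd : (X ^ p - X : (ZMod p)[X]).natDegree = p := by
    exact FiniteField.X_pow_card_sub_X_natDegree_eq (ZMod p) h1
  have hcard : Multiset.card (X ^ p - X : (ZMod p)[X]).roots = (X ^ p - X : (ZMod p)[X]).natDegree := by
    rw [hroots, hnd]
    simpa using (ZMod.card p)
  have := prod_multiset_X_sub_C_of_monic_of_roots_card_eq (monic_XpX p) hcard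
  rw [hroots] at this
  rw [← this]
  rfl

theorem prod_X_add_C_zmod : (∏ c : ZMod p, (X + C c)) = X ^ p - X := by
  rw [← prod_X_sub_C_zmod p]
  refine Fintype.prod_equiv (Equiv.neg (ZMod p)) _ _ fun c => ?_
  simp [sub_eq_add_neg]

theorem prod_add_eval {A : Type*} [CommRing A] [Algebra (ZMod p) A] (y : A) :
    (∏ c : ZMod p, (y + algebraMap (ZMod p) A c)) = y ^ p - y := by
  have := congrArg (Polynomial.aeval y) (prod_X_add_C_zmod p)
  simpa only [map_prod, map_add, map_sub, map_pow, Polynomial.aeval_X, Polynomial.aeval_C]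
    using this

theorem prod_add_smul_unit {A : Type*} [CommRing A] [Algebra (ZMod p) A] (g : A) (u : Aˣ) :
    (∏ c : ZMod p, (g + c • (u : A))) = g ^ p - (u : A) ^ (p - 1) * g := by
  have h1 : 1 < p := (Fact.out : p.Prime).one_lt
  have hcard : Fintype.card (ZMod p) = p := ZMod.card p
  have h1' : ∀ c : ZMod p,
      g + c • (u : A) = (u : A) * ((↑u⁻¹ : A) * g + algebraMap (ZMod p) A c) := by
    intro c
    rw [mul_add, ← mul_assoc, Units.mul_inv, one_mul, Algebra.smul_def, mul_comm (algebraMap _ _ c)]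
  have hup : (u : A) ^ p * ((↑u⁻¹ : A) * g) ^ p = g ^ p := by
    rw [← mul_pow, ← mul_assoc, Units.mul_inv, one_mul]
  have huu : (u : A) ^ p * (↑u⁻¹ : A) = (u : A) ^ (p - 1) := by
    have h3 : (u ^ p * u⁻¹ : Aˣ) = u ^ (p - 1) := by
      conv_lhs => rw [show p = (p - 1) + 1 from (Nat.sub_add_cancel h1.le).symm]
      rw [pow_succ, mul_inv_cancel_right]
    calc (u : A) ^ p * (↑u⁻¹ : A) = ((u ^ p * u⁻¹ : Aˣ) : A) := by
          rw [Units.val_mul, Units.val_pow_eq_pow_val]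
      _ = (u : A) ^ (p - 1) := by rw [h3, Units.val_pow_eq_pow_val]
  calc (∏ c : ZMod p, (g + c • (u : A)))
      = ∏ c : ZMod p, ((u : A) * ((↑u⁻¹ : A) * g + algebraMap (ZMod p) A c)) :=
        Finset.prod_congr rfl fun c _ => h1' c
    _ = (u : A) ^ p * ∏ c : ZMod p, ((↑u⁻¹ : A) * g + algebraMap (ZMod p) A c) := by
        rw [Finset.prod_mul_distrib, Finset.prod_const, Finset.card_univ, hcard]
    _ = (u : A) ^ p * (((↑u⁻¹ : A) * g) ^ p - (↑u⁻¹ : A) * g) := by rw [prod_add_eval]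
    _ = g ^ p - (u : A) ^ (p - 1) * g := by
        rw [mul_sub, hup, ← mul_assoc, huu]

theorem prod_add_isUnit {A : Type*} [CommRing A] [Algebra (ZMod p) A] (g : A) {a : A}
    (ha : IsUnit a) :
    (∏ c : ZMod p, (g + c • a)) = g ^ p - a ^ (p - 1) * g := by
  have := prod_add_smul_unit p g ha.unit
  simpa [ha.unit_spec] using this

/-! ### The submodule of `p`-power-supported polynomials -/

variable (A : Type*) [CommRing A] [Algebra (ZMod p) A]

noncomputable def T : Submodule A (Polynomial A) :=
  Submodule.span A (Set.range fun r : ℕ => (X : A[X]) ^ p ^ r)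

variable {A}

theorem X_mem_T : (X : A[X]) ∈ T p A :=
  Submodule.subset_span ⟨0, by simp⟩

theorem pow_p_mem_T [CharP A p] {x : A[X]} (hx : x ∈ T p A) : x ^ p ∈ T p A := by
  induction hx using Submodule.span_induction with
  | mem x h =>
    obtain ⟨r, rfl⟩ := h
    refine Submodule.subset_span ⟨r + 1, ?_⟩
    show (X : A[X]) ^ p ^ (r + 1) = (X ^ p ^ r) ^ p
    rw [← pow_mul, ← pow_succ]
  | zero => simpa [zero_pow (Fact.out : p.Prime).ne_zero] using (Submodule.zero_mem (T p A))
  | add x y hx hy ihx ihy => rw [add_pow_char]; exact add_mem ihx ihy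
  | smul a x hx ih =>
    rw [Polynomial.smul_eq_C_mul, mul_pow, ← C_pow, ← Polynomial.smul_eq_C_mul]
    exact Submodule.smul_mem _ _ ih

theorem coeff_T {x : A[X]} (hx : x ∈ T p A) {k : ℕ} (hk : ∀ r : ℕ, k ≠ p ^ r) :
    x.coeff k = 0 := by
  induction hx using Submodule.span_induction with
  | mem x h =>
    obtain ⟨r, rfl⟩ := h
    simp [coeff_X_pow, hk r]
  | zero => simp
  | add x y hx hy ihx ihy => simp [ihx, ihy]
  | smul a x hx ih => rw [coeff_smul, ih, smul_zero]

theorem comp_T [CharP A p] {x : A[X]} (hx : x ∈ T p A) (t : A) :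
    x.comp (X + C t) = x + C (x.eval t) := by
  induction hx using Submodule.span_induction with
  | mem x h =>
    obtain ⟨r, rfl⟩ := h
    simp [pow_comp, add_pow_char_pow, eval_pow, C_pow]
  | zero => simp
  | add x y hx hy ihx ihy =>
    rw [add_comp, ihx, ihy, eval_add, C_add]; ring
  | smul a x hx ih =>
    rw [Polynomial.smul_eq_C_mul, mul_comp, C_comp, ih, eval_mul, eval_C, C_mul]; ring

theorem eval_smul_T {x : A[X]} (hx : x ∈ T p A) (c : ZMod p) (s : A) :
    x.eval (c • s) = c • x.eval s := by
  haveI : NeZero p := ⟨(Fact.out : p.Prime).ne_zero⟩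
  induction hx using Submodule.span_induction with
  | mem x h =>
    obtain ⟨r, rfl⟩ := h
    have hc : c ^ (p ^ r) = c := by
      have := FiniteField.pow_card_pow (K := ZMod p) r c
      rwa [ZMod.card] at this
    simp [eval_pow, _root_.smul_pow, hc]
  | zero => simp
  | add x y hx hy ihx ihy => simp [ihx, ihy, smul_add]
  | smul a x hx ih =>
    rw [Polynomial.smul_eq_C_mul, eval_mul, eval_C, eval_mul, eval_C, ih, mul_smul_comm]

/-! ### The Dickson product lies in `T` -/

theorem prod_mem_T {A : Type*} [CommRing A] [IsDomain A] [Algebra (ZMod p) A] [CharP A p] :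
    ∀ (m : ℕ) (v : Fin m → A),
      (∏ c : Fin m → ZMod p, (X + C (∑ i, c i • v i))) ∈ T p A := by
  intro m
  induction m with
  | zero =>
    intro v
    have h0 : ∀ c : Fin 0 → ZMod p, (X + C (∑ i, c i • v i) : A[X]) = X := by
      intro c; simp
    rw [Finset.prod_congr rfl fun c _ => h0 c, Finset.prod_const, Finset.card_univ]
    have : Fintype.card (Fin 0 → ZMod p) = 1 := by simp
    rw [this, pow_one]
    exact X_mem_T p
  | succ m ih =>
    intro v
    set G : A[X] := ∏ c : Fin m → ZMod p, (X + C (∑ i, c i • v (Fin.succ i))) with hG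
    have hGT : G ∈ T p A := ih _
    set ev : A := G.eval (v 0) with hev'
    have key : (∏ c : Fin (m+1) → ZMod p, (X + C (∑ i, c i • v i)))
        = ∏ c₀ : ZMod p, (G + c₀ • C ev) := by
      rw [← Equiv.prod_comp (Fin.consEquiv fun _ => ZMod p)
        (fun c => (X + C (∑ i, c i • v i) : A[X]))]
      rw [Fintype.prod_prod_type]
      refine Finset.prod_congr rfl fun c₀ _ => ?_
      have inner : ∀ c' : Fin m → ZMod p,
          (X + C (∑ i, (Fin.consEquiv fun _ => ZMod p) (c₀, c') i • v i) : A[X])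
            = ((X + C (∑ i, c' i • v (Fin.succ i))) + C (c₀ • v 0)) := by
        intro c'
        rw [show ((Fin.consEquiv fun _ => ZMod p) (c₀, c') : Fin (m+1) → ZMod p)
          = Fin.cons c₀ c' from rfl]
        rw [Fin.sum_univ_succ]
        simp only [Fin.cons_zero, Fin.cons_succ, C_add]
        ring
      rw [Finset.prod_congr rfl fun c' _ => inner c']
      have hcomp : (∏ c' : Fin m → ZMod p,
          ((X + C (∑ i, c' i • v (Fin.succ i))) + C (c₀ • v 0) : A[X]))
          = G.comp (X + C (c₀ • v 0)) := by
        rw [hG, Polynomial.prod_comp]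
        refine Finset.prod_congr rfl fun c' _ => ?_
        simp only [add_comp, X_comp, C_comp]
        ring
      rw [hcomp, comp_T p hGT, eval_smul_T p hGT, ← Polynomial.smul_C]
    rw [key]
    by_cases hev : ev = 0
    · have : (∏ c₀ : ZMod p, (G + c₀ • C ev)) = G ^ p := by
        rw [hev]
        simp [Finset.prod_const, Finset.card_univ, ZMod.card]
      rw [this]
      exact pow_p_mem_T p hGT
    · set K := FractionRing A
      have hinj : Function.Injective (algebraMap A K) := IsFractionRing.injective A K
      have hinjX : Function.Injective (Polynomial.map (algebraMap A K)) :=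
        Polynomial.map_injective _ hinj
      have he' : algebraMap A K ev ≠ 0 := fun h => hev (hinj (by simpa using h))
      have hu : IsUnit (C (algebraMap A K ev) : K[X]) := Polynomial.isUnit_C.mpr he'.isUnit
      have himg : Polynomial.map (algebraMap A K) (∏ c₀ : ZMod p, (G + c₀ • C ev))
          = Polynomial.map (algebraMap A K) (G ^ p - C (ev ^ (p-1)) * G) := by
        rw [Polynomial.map_prod, Polynomial.map_sub, Polynomial.map_pow, Polynomial.map_mul,
          map_C]
        have hfac : ∀ c₀ : ZMod p, Polynomial.map (algebraMap A K) (G + c₀ • C ev)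
            = (Polynomial.map (algebraMap A K) G + c₀ • C (algebraMap A K ev)) := by
          intro c₀
          rw [Polynomial.map_add]
          congr 1
          rw [Polynomial.smul_C, Polynomial.map_C,
            show (algebraMap A K) (c₀ • ev) = c₀ • (algebraMap A K) ev from
              map_smul (IsScalarTower.toAlgHom (ZMod p) A K) c₀ ev]
          exact Polynomial.smul_C c₀ _ |>.symm
        rw [Finset.prod_congr rfl fun c₀ _ => hfac c₀, prod_add_isUnit p _ hu, ← C_pow,
          ← map_pow (algebraMap A K) ev]
      have := hinjX himg
      rw [this]
      refine sub_mem (pow_p_mem_T p hGT) ?_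
      rw [← Polynomial.smul_eq_C_mul]
      exact Submodule.smul_mem _ _ hGT


/-! ### Facts about `dicksonF` -/

theorem dicksonF_mem_T (n : ℕ) : dicksonF p n ∈ T p (MvPolynomial (Fin n) (ZMod p)) :=
  prod_mem_T p n fun i => MvPolynomial.X i

theorem dicksonF_coeff_eq_zero (n : ℕ) {k : ℕ} (hk : ∀ r : ℕ, k ≠ p ^ r) :
    (dicksonF p n).coeff k = 0 :=
  coeff_T p (dicksonF_mem_T p n) hk

theorem dicksonF_monic (n : ℕ) : (dicksonF p n).Monic :=
  monic_prod_of_monic _ _ fun _ _ => monic_X_add_C _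

theorem dicksonF_natDegree (n : ℕ) : (dicksonF p n).natDegree = p ^ n := by
  haveI : NeZero p := ⟨(Fact.out : p.Prime).ne_zero⟩
  rw [dicksonF, natDegree_prod _ _ fun c _ => (monic_X_add_C _).ne_zero]
  simp only [natDegree_X_add_C]
  rw [Finset.sum_const, Finset.card_univ, smul_eq_mul, mul_one, Fintype.card_fun,
    ZMod.card, Fintype.card_fin]

theorem dicksonF_eval_X (n : ℕ) (i : Fin n) :
    Polynomial.eval (MvPolynomial.X i) (dicksonF p n) = 0 := by
  classical
  rw [dicksonF, eval_prod]
  refine Finset.prod_eq_zero (Finset.mem_univ (fun j => if j = i then (-1 : ZMod p) else 0)) ?_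
  rw [eval_add, eval_X, eval_C]
  have hs : (∑ j, (if j = i then (-1 : ZMod p) else 0) • MvPolynomial.X j)
      = - (MvPolynomial.X i : MvPolynomial (Fin n) (ZMod p)) := by
    rw [Finset.sum_eq_single i]
    · simp
    · intro b _ hb; simp [hb]
    · intro h; exact absurd (Finset.mem_univ i) h
  rw [hs]
  simp

/-! ### A Schwartz–Zippel-type counting bound -/

theorem totalDegree_map_le {R S : Type*} [CommSemiring R] [CommSemiring S] (f : R →+* S)
    {σ : Type*} (P : MvPolynomial σ R) :
    (MvPolynomial.map f P).totalDegree ≤ P.totalDegree :=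
  Finset.sup_mono (MvPolynomial.support_map_subset f P)

theorem schwartz_zippel {K : Type*} [Field K] [Fintype K] [DecidableEq K] :
    ∀ (n : ℕ) (P : MvPolynomial (Fin n) K), P ≠ 0 →
      (Finset.univ.filter fun a : Fin n → K => MvPolynomial.eval a P = 0).card * Fintype.card K
        ≤ P.totalDegree * Fintype.card K ^ n := by
  intro n
  induction n with
  | zero =>
    intro P hP
    have he : (Finset.univ.filter fun a : Fin 0 → K => MvPolynomial.eval a P = 0) = ∅ := by
      rw [Finset.filter_eq_empty_iff]
      intro a _
      rw [MvPolynomial.eq_C_of_isEmpty P, MvPolynomial.eval_C]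
      intro h
      exact hP (by rw [MvPolynomial.eq_C_of_isEmpty P, h, map_zero])
    rw [he]
    simp
  | succ n ih =>
    intro P hP
    set q := Fintype.card K with hq
    set d := P.totalDegree with hd
    set Q := MvPolynomial.finSuccEquiv K n P with hQdef
    have hQ0 : Q ≠ 0 := by
      intro h
      exact hP ((map_eq_zero_iff (MvPolynomial.finSuccEquiv K n)
        (AlgEquiv.injective _)).mp (by rw [← hQdef]; exact h))
    set k := Q.natDegree with hk
    set Pk := Q.coeff k with hPkdef
    have hPk0 : Pk ≠ 0 := by
      rw [hPkdef, hk]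
      exact Polynomial.leadingCoeff_ne_zero.mpr hQ0
    have hPkd : Pk.totalDegree + k ≤ d :=
      MvPolynomial.totalDegree_coeff_finSuccEquiv_add_le P k hPk0
    set Z := Finset.univ.filter (fun a : Fin (n+1) → K => MvPolynomial.eval a P = 0) with hZ
    set B := Finset.univ.filter (fun b : Fin n → K => MvPolynomial.eval b Pk = 0) with hB
    have hBcard : B.card * q ≤ Pk.totalDegree * q ^ n := ih Pk hPk0
    have hfib : Z.card = ∑ b : Fin n → K, (Z.filter fun a => Fin.tail a = b).card :=
      Finset.card_eq_sum_card_fiberwise (fun a _ => Finset.mem_univ _)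
    have hinj0 : ∀ (b : Fin n → K),
        Set.InjOn (fun a : Fin (n+1) → K => a 0) (Z.filter fun a => Fin.tail a = b) := by
      intro b a1 h1 a2 h2 h12
      have t1 : Fin.tail a1 = b := (Finset.mem_filter.mp (Finset.mem_coe.mp h1)).2
      have t2 : Fin.tail a2 = b := (Finset.mem_filter.mp (Finset.mem_coe.mp h2)).2
      have h12' : a1 0 = a2 0 := h12
      rw [← Fin.cons_self_tail a1, ← Fin.cons_self_tail a2, t1, t2, h12']
    have hfib_all : ∀ b : Fin n → K, (Z.filter fun a => Fin.tail a = b).card ≤ q := by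
      intro b
      rw [hq, ← Finset.card_univ]
      exact Finset.card_le_card_of_injOn (fun a => a 0) (fun a _ => Finset.mem_univ _) (hinj0 b)
    have hfib_good : ∀ b : Fin n → K, b ∉ B → (Z.filter fun a => Fin.tail a = b).card ≤ k := by
      intro b hb
      have hpb : MvPolynomial.eval b Pk ≠ 0 := by
        intro h; exact hb (Finset.mem_filter.mpr ⟨Finset.mem_univ _, h⟩)
      set g : K[X] := Q.map (MvPolynomial.eval b) with hg
      have hg0 : g ≠ 0 := by
        intro h
        apply hpb
        have h2 : g.coeff k = 0 := by rw [h]; simp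
        rwa [hg, Polynomial.coeff_map] at h2
      have hgdeg : g.natDegree ≤ k := Polynomial.natDegree_map_le
      have hroots : g.roots.toFinset.card ≤ k :=
        le_trans (Multiset.toFinset_card_le _) (le_trans (Polynomial.card_roots' g) hgdeg)
      refine le_trans (Finset.card_le_card_of_injOn (fun a => a 0) (fun a ha => ?_) (hinj0 b))
        hroots
      have haZ := Finset.mem_filter.mp ha
      have haZ' := Finset.mem_filter.mp haZ.1
      have htail : Fin.tail a = b := haZ.2
      have heval : MvPolynomial.eval a P = 0 := haZ'.2
      rw [Finset.mem_coe, Multiset.mem_toFinset, Polynomial.mem_roots hg0]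
      show g.IsRoot (a 0)
      rw [Polynomial.IsRoot, hg]
      have hrw := MvPolynomial.eval_eq_eval_mv_eval' b (a 0) P
      rw [show (Fin.cons (a 0) b : Fin (n+1) → K) = a by
        rw [← htail]; exact Fin.cons_self_tail a] at hrw
      rw [← hQdef] at hrw
      rw [← hrw]
      exact heval
    have split : Z.card ≤ B.card * q + q ^ n * k := by
      rw [hfib]
      have e1 : ∑ b : Fin n → K, (Z.filter fun a => Fin.tail a = b).card
          = ∑ b ∈ B, (Z.filter fun a => Fin.tail a = b).card
            + ∑ b ∈ Finset.univ \ B, (Z.filter fun a => Fin.tail a = b).card := by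
        rw [← Finset.sum_sdiff (Finset.subset_univ B)]
        exact add_comm _ _
      rw [e1]
      have b1 : ∑ b ∈ B, (Z.filter fun a => Fin.tail a = b).card ≤ B.card * q := by
        have := Finset.sum_le_card_nsmul B _ q (fun b _ => hfib_all b)
        simpa using this
      have b2 : ∑ b ∈ Finset.univ \ B, (Z.filter fun a => Fin.tail a = b).card ≤ q ^ n * k := by
        have h2 := Finset.sum_le_card_nsmul (Finset.univ \ B) _ k
          (fun b hb => hfib_good b (Finset.mem_sdiff.mp hb).2)
        have h3 : (Finset.univ \ B).card ≤ q ^ n := by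
          refine le_trans (Finset.card_le_card (Finset.sdiff_subset)) ?_
          rw [Finset.card_univ, Fintype.card_fun, Fintype.card_fin]
        calc ∑ b ∈ Finset.univ \ B, (Z.filter fun a => Fin.tail a = b).card
            ≤ (Finset.univ \ B).card * k := by simpa using h2
          _ ≤ q ^ n * k := Nat.mul_le_mul_right _ h3
      exact add_le_add b1 b2
    calc Z.card * q ≤ (B.card * q + q ^ n * k) * q := Nat.mul_le_mul_right _ split
      _ = B.card * q * q + k * q ^ (n+1) := by ring
      _ ≤ Pk.totalDegree * q ^ n * q + k * q ^ (n+1) :=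
          Nat.add_le_add_right (Nat.mul_le_mul_right _ hBcard) _
      _ = (Pk.totalDegree + k) * q ^ (n+1) := by ring
      _ ≤ d * q ^ (n+1) := Nat.mul_le_mul_right _ hPkd

/-! ### Fibers of the Dickson evaluation map -/

noncomputable def dEval (p n : ℕ) [Fact p.Prime] {K : Type*} [CommSemiring K]
    [Algebra (ZMod p) K] (a : Fin n → K) : Fin n → K :=
  fun r => MvPolynomial.aeval a (dicksonD p n (r : ℕ))

theorem fiber_bound {n : ℕ} {K : Type*} [Field K] [Fintype K] [DecidableEq K]
    [Algebra (ZMod p) K] (b : Fin n → K)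
    (hb : b ∈ Finset.univ.image (dEval p n (K := K))) :
    (Finset.univ.filter fun a : Fin n → K => dEval p n a = b).card ≤ (p ^ n) ^ n := by
  obtain ⟨a₀, -, ha₀⟩ := Finset.mem_image.mp hb
  set g : K[X] := (dicksonF p n).map (MvPolynomial.aeval a₀ :
    MvPolynomial (Fin n) (ZMod p) →ₐ[ZMod p] K).toRingHom with hg
  have hgmonic : g.Monic := (dicksonF_monic p n).map _
  have hgdeg : g.natDegree = p ^ n := by
    rw [hg, (dicksonF_monic p n).natDegree_map, dicksonF_natDegree]
  have hcommon : ∀ a : Fin n → K, dEval p n a = b →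
      (dicksonF p n).map (MvPolynomial.aeval a :
        MvPolynomial (Fin n) (ZMod p) →ₐ[ZMod p] K).toRingHom = g := by
    intro a ha
    ext j
    rw [Polynomial.coeff_map, hg, Polynomial.coeff_map]
    simp only [AlgHom.toRingHom_eq_coe, RingHom.coe_coe]
    by_cases hj : ∃ r : ℕ, j = p ^ r
    · obtain ⟨r, rfl⟩ := hj
      rcases lt_trichotomy r n with hr | hr | hr
      · have hcoeff : (dicksonF p n).coeff (p ^ r) = dicksonD p n r := rfl
        rw [hcoeff]
        have h1 : MvPolynomial.aeval a (dicksonD p n r) = b ⟨r, hr⟩ := by rw [← ha]; rfl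
        have h2 : MvPolynomial.aeval a₀ (dicksonD p n r) = b ⟨r, hr⟩ := by rw [← ha₀]; rfl
        rw [h1, h2]
      · have hone : (dicksonF p n).coeff (p ^ n) = 1 := by
          have := (dicksonF_monic p n).coeff_natDegree
          rwa [dicksonF_natDegree] at this
        rw [hr, hone]; simp
      · have hzero : (dicksonF p n).coeff (p ^ r) = 0 := by
          apply Polynomial.coeff_eq_zero_of_natDegree_lt
          rw [dicksonF_natDegree]
          exact Nat.pow_lt_pow_right (Fact.out : p.Prime).one_lt hr
        rw [hzero]; simp
    · have hzero : (dicksonF p n).coeff j = 0 :=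
        dicksonF_coeff_eq_zero p n (fun r hr => hj ⟨r, hr⟩)
      rw [hzero]; simp
  have hroot : ∀ a : Fin n → K, dEval p n a = b → ∀ i, a i ∈ g.roots.toFinset := by
    intro a ha i
    rw [Multiset.mem_toFinset, Polynomial.mem_roots hgmonic.ne_zero]
    rw [← hcommon a ha]
    have h1 : a i = (MvPolynomial.aeval a :
        MvPolynomial (Fin n) (ZMod p) →ₐ[ZMod p] K).toRingHom (MvPolynomial.X i) := by simp
    rw [Polynomial.IsRoot, h1, Polynomial.eval_map, Polynomial.eval₂_at_apply,
      dicksonF_eval_X, map_zero]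
  refine le_trans (Finset.card_le_card_of_injOn
    (t := Fintype.piFinset fun _ : Fin n => g.roots.toFinset) (fun a => a)
    (fun a ha => ?_) (fun a _ a' _ h => h)) ?_
  · rw [Finset.mem_coe, Fintype.mem_piFinset]
    exact fun i => hroot a (Finset.mem_filter.mp ha).2 i
  · rw [Fintype.card_piFinset]
    calc ∏ _i : Fin n, g.roots.toFinset.card ≤ ∏ _i : Fin n, p ^ n := by
          refine Finset.prod_le_prod' fun i _ => ?_
          exact le_trans (Multiset.toFinset_card_le _)
            (le_trans (Polynomial.card_roots' g) (le_of_eq hgdeg))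
      _ = (p ^ n) ^ n := by rw [Finset.prod_const, Finset.card_univ, Fintype.card_fin]

end DicksonAux

/-- The Dickson invariants `D_{n,0}, …, D_{n,n-1}` are algebraically independent over `𝔽_p`. -/
theorem dicksonD_algebraicIndependent (p n : ℕ) [Fact p.Prime] :
    AlgebraicIndependent (ZMod p) (fun r : Fin n => dicksonD p n (r : ℕ)) := by
  classical
  rw [algebraicIndependent_iff]
  intro P hPev
  by_contra hP
  have hprime : p.Prime := Fact.out
  set d := P.totalDegree with hd
  set m := n * n + d + 1 with hm
  have hm0 : m ≠ 0 := by omega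
  set K := GaloisField p m with hK
  letI : Fintype K := Fintype.ofFinite K
  letI : DecidableEq K := Classical.decEq K
  have hq : Fintype.card K = p ^ m := by
    rw [← Nat.card_eq_fintype_card, GaloisField.card p m hm0]
  set q := Fintype.card K with hqd
  set P' := MvPolynomial.map (algebraMap (ZMod p) K) P with hP'
  have hP'0 : P' ≠ 0 := by
    intro h
    apply hP
    have hinj : Function.Injective
        (MvPolynomial.map (σ := Fin n) (algebraMap (ZMod p) K)) :=
      MvPolynomial.map_injective _ (algebraMap (ZMod p) K).injective
    exact hinj (by rw [← hP', h, map_zero])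
  have hP'deg : P'.totalDegree ≤ d := DicksonAux.totalDegree_map_le _ P
  have hkey : ∀ a : Fin n → K, MvPolynomial.eval (DicksonAux.dEval p n a) P' = 0 := by
    intro a
    have h1 : MvPolynomial.eval (DicksonAux.dEval p n a) P'
        = MvPolynomial.aeval (DicksonAux.dEval p n a) P := by
      rw [hP', MvPolynomial.eval_map, MvPolynomial.aeval_def]
    rw [h1]
    have h2 : (MvPolynomial.aeval (DicksonAux.dEval p n a) :
        MvPolynomial (Fin n) (ZMod p) →ₐ[ZMod p] K)
        = (MvPolynomial.aeval a).comp
          (MvPolynomial.aeval (fun r : Fin n => dicksonD p n (r : ℕ))) := by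
      rw [MvPolynomial.comp_aeval]
      rfl
    have h3 := DFunLike.congr_fun h2 P
    rw [h3, AlgHom.comp_apply, hPev, map_zero]
  set Z := Finset.univ.filter (fun bb : Fin n → K => MvPolynomial.eval bb P' = 0) with hZ
  have hZcard : Z.card * q ≤ d * q ^ n :=
    le_trans (DicksonAux.schwartz_zippel n P' hP'0) (Nat.mul_le_mul_right _ hP'deg)
  have himage : Finset.univ.image (DicksonAux.dEval p n (K := K)) ⊆ Z := by
    intro b hb
    obtain ⟨a, -, rfl⟩ := Finset.mem_image.mp hb
    exact Finset.mem_filter.mpr ⟨Finset.mem_univ _, hkey a⟩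
  have hdomain : q ^ n ≤ (p ^ n) ^ n * Z.card := by
    have h1 : (Finset.univ : Finset (Fin n → K)).card
        ≤ (p ^ n) ^ n * (Finset.univ.image (DicksonAux.dEval p n (K := K))).card :=
      Finset.card_le_mul_card_image _ _ (fun b hb => DicksonAux.fiber_bound p b hb)
    have h2 : (Finset.univ : Finset (Fin n → K)).card = q ^ n := by
      rw [Finset.card_univ, Fintype.card_fun, Fintype.card_fin]
    calc q ^ n = _ := h2.symm
      _ ≤ (p ^ n) ^ n * (Finset.univ.image (DicksonAux.dEval p n (K := K))).card := h1
      _ ≤ (p ^ n) ^ n * Z.card := Nat.mul_le_mul_left _ (Finset.card_le_card himage)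
  have hfinal : q ^ n * q ≤ ((p ^ n) ^ n * d) * q ^ n := by
    calc q ^ n * q ≤ ((p ^ n) ^ n * Z.card) * q := Nat.mul_le_mul_right _ hdomain
      _ = (p ^ n) ^ n * (Z.card * q) := by ring
      _ ≤ (p ^ n) ^ n * (d * q ^ n) := Nat.mul_le_mul_left _ hZcard
      _ = ((p ^ n) ^ n * d) * q ^ n := by ring
  have hqnpos : 0 < q ^ n := pow_pos Fintype.card_pos _
  have hle : q ≤ (p ^ n) ^ n * d := by
    have h4 : q * q ^ n ≤ ((p ^ n) ^ n * d) * q ^ n := by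
      calc q * q ^ n = q ^ n * q := by ring
        _ ≤ ((p ^ n) ^ n * d) * q ^ n := hfinal
    exact Nat.le_of_mul_le_mul_right h4 hqnpos
  have hgt : (p ^ n) ^ n * d < q := by
    have hd_lt : d < p ^ (d + 1) :=
      lt_of_lt_of_le (Nat.lt_pow_self hprime.one_lt : d < p ^ d)
        (Nat.pow_le_pow_right hprime.pos (Nat.le_succ d))
    calc (p ^ n) ^ n * d = p ^ (n * n) * d := by rw [← pow_mul]
      _ < p ^ (n * n) * p ^ (d + 1) :=
          mul_lt_mul_of_pos_left hd_lt (pow_pos hprime.pos _)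
      _ = p ^ m := by
          rw [← pow_add, hm]
          congr 1
      _ = q := hq.symm
  omega
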